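/- Let f(x) = υ(x)·x^{-p} satisfy (H1)-(H3) with p > 0. Then there exists θ > 0 (indeed any θ > (p+1)/p works) such that f(x)^θ / |f'(x)| → 0 as x → +∞; in particular |f'(x)| ≫ f(x)^θ (assumption (A5)). -/

import Mathlib

open Filter Real

theorem stmt_13 (f υ : ℝ → ℝ) (p : ℝ) (hp : 0 < p)
    (hC : ContDiff ℝ 3 υ) (hpos : ∀ x ≥ (0:ℝ), 0 < υ x)
    (hH1 : ∀ x > (0:ℝ), f x = υ x * x ^ (-p))
    (hH2 : ∀ ε > (0:ℝ), Tendsto (fun x => υ x * x ^ (-ε)) atTop (nhds 0))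
    (hH3 : ∀ i ∈ ({1, 2, 3} : Set ℕ),
      Tendsto (fun x => iteratedDeriv i υ x * x ^ (i : ℕ) / υ x) atTop (nhds 0)) :
    ∀ θ : ℝ, (p + 1) / p < θ →
      Tendsto (fun x => f x ^ θ / |deriv f x|) atTop (nhds 0) := by
  intro θ hθ
  have hθ1 : 1 < θ := by
    have : (1:ℝ) < (p + 1) / p := by
      rw [lt_div_iff₀ hp]; linarith
    linarith
  set ε := (p * θ - p - 1) / (θ - 1) with hεdef
  have hθ1' : 0 < θ - 1 := by linarith
  have hεpos : 0 < ε := by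
    apply div_pos _ hθ1'
    have := (div_lt_iff₀ hp).mp hθ
    linarith
  set G := fun x => deriv υ x * x / υ x with hGdef
  have hG0 : Tendsto G atTop (nhds 0) := by
    have h1 := hH3 1 (by simp)
    simpa [iteratedDeriv_one] using h1
  -- derivative of f
  have hderiv : ∀ x > (0:ℝ), deriv f x = υ x * x ^ (-p - 1) * (G x - p) := by
    intro x hx
    have hne : x ≠ 0 := hx.ne'
    have hux : υ x ≠ 0 := (hpos x hx.le).ne'
    have hu : HasDerivAt υ (deriv υ x) x :=
      ((hC.differentiable (by norm_num)) x).hasDerivAt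
    have hr : HasDerivAt (fun y : ℝ => y ^ (-p)) (-p * x ^ (-p - 1)) x :=
      Real.hasDerivAt_rpow_const (Or.inl hne)
    have hfd : HasDerivAt f (deriv υ x * x ^ (-p) + υ x * (-p * x ^ (-p - 1))) x := by
      refine (hu.mul hr).congr_of_eventuallyEq ?_
      filter_upwards [eventually_gt_nhds hx] with y hy
      exact hH1 y hy
    rw [hfd.deriv]
    have hx1 : x ^ (-p) = x ^ (-p - 1) * x := by
      rw [← Real.rpow_add_one hne (-p - 1)]; ring_nf
    rw [hx1]
    simp only [hGdef]
    field_simp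
    ring
  -- main limit
  have habs : Tendsto (fun x => |G x - p|) atTop (nhds p) := by
    have := (hG0.sub_const p).abs
    simpa [abs_of_nonneg hp.le] using this
  have h1 : Tendsto (fun x => (υ x * x ^ (-ε)) ^ (θ - 1)) atTop (nhds 0) := by
    have := (hH2 ε hεpos).rpow_const (Or.inr hθ1'.le)
    simpa [Real.zero_rpow (ne_of_gt hθ1')] using this
  have hmain : Tendsto (fun x => (υ x * x ^ (-ε)) ^ (θ - 1) / |G x - p|) atTop (nhds 0) := by
    have := h1.div habs hp.ne'
    rw [zero_div] at this
    exact this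
  refine hmain.congr' ?_
  -- eventual equality
  have hGev : ∀ᶠ x in atTop, p / 2 < |G x - p| :=
    habs.eventually (eventually_gt_nhds (by linarith))
  filter_upwards [hGev, eventually_gt_atTop (0:ℝ)] with x hGx hx
  have hne : x ≠ 0 := hx.ne'
  have hux : 0 < υ x := hpos x hx.le
  have hGne : |G x - p| ≠ 0 := ne_of_gt (lt_trans (half_pos hp) hGx)
  have hfx : f x = υ x * x ^ (-p) := hH1 x hx
  rw [hfx, hderiv x hx]
  have hxp : (0:ℝ) < x ^ (-p) := Real.rpow_pos_of_pos hx _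
  have hxp1 : (0:ℝ) < x ^ (-p - 1) := Real.rpow_pos_of_pos hx _
  have habs2 : |υ x * x ^ (-p - 1) * (G x - p)| = υ x * x ^ (-p - 1) * |G x - p| := by
    rw [abs_mul, abs_of_pos (by positivity : (0:ℝ) < υ x * x ^ (-p - 1))]
  rw [habs2]
  -- expand rpow
  have e1 : (υ x * x ^ (-p)) ^ θ = υ x ^ θ * x ^ (-p * θ) := by
    rw [Real.mul_rpow hux.le hxp.le, ← Real.rpow_mul hx.le]
  have e2 : (υ x * x ^ (-ε)) ^ (θ - 1) = υ x ^ (θ - 1) * x ^ (-ε * (θ - 1)) := by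
    rw [Real.mul_rpow hux.le (Real.rpow_pos_of_pos hx _).le, ← Real.rpow_mul hx.le]
  have eε : -ε * (θ - 1) = -p * θ + p + 1 := by
    have hε1 : ε * (θ - 1) = p * θ - p - 1 := by
      rw [hεdef]; exact div_mul_cancel₀ _ hθ1'.ne'
    linarith
  have e3 : υ x ^ θ = υ x ^ (θ - 1) * υ x := by
    rw [← Real.rpow_add_one hux.ne' (θ - 1)]; ring_nf
  have e4 : x ^ (-p * θ) = x ^ (-p * θ + p + 1) * x ^ (-p - 1) := by
    rw [← Real.rpow_add hx]; ring_nf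
  rw [e1, e2, eε, e3, e4]
  have h1 : (0:ℝ) < υ x ^ (θ - 1) := Real.rpow_pos_of_pos hux _
  field_simp
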